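/- Let Z_V be an N×N complex matrix with a simple eigenvalue μ_V, with right eigenvector x_0 and left eigenvector w normalized so that wᵀx_0 = 1 and such that wᵀz = 0 iff z ∈ Im(Z_V − μ_V). Given matrices Z_{V+1}, Z_{V+2}, … and defining recursively μ_{V+n} := wᵀ(Z_{V+n}x_0 + ∑_{i=1}^{n−1}(Z_{V+i} − μ_{V+i})x_{n−i}) and x_n := −f(∑_{i=1}^{n}(Z_{V+i} − μ_{V+i})x_{n−i}) where f is a right inverse of (Z_V − μ_V) on its image, the correction terms satisfy ∑_{i=1}^{n}(Z_{V+i} − μ_{V+i})x_{n−i} ∈ Im(Z_V − μ_V) for all n ≥ 1, so the recursion is well defined. -/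

import Mathlib

/-- Lemma 2.8: well-definedness of the simple-eigenvalue recursion.
Let `Z 0` have a simple eigenvalue `μ 0` with right eigenvector `x 0` and left
eigenvector `w`, normalized by `wᵀ(x 0) = 1` and such that `wᵀz = 0` iff
`z ∈ Im (Z 0 − μ 0)`.  Let `f` be a right inverse of `Z 0 − μ 0` on its image, and
define recursively
`μ n = wᵀ(Z n (x 0) + ∑_{i=1}^{n−1} (Z i − μ i)(x (n−i)))` and
`x n = −f (∑_{i=1}^{n} (Z i − μ i)(x (n−i)))`.
Then for every `n ≥ 1` the vector `∑_{i=1}^{n} (Z i − μ i)(x (n−i))` lies in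
`Im (Z 0 − μ 0)`, so the recursion is well defined. -/
theorem perturbation_recursion_well_defined (N : ℕ)
    (Z : ℕ → Matrix (Fin N) (Fin N) ℂ) (μ : ℕ → ℂ)
    (x : ℕ → Fin N → ℂ) (w : Fin N → ℂ)
    (f : (Fin N → ℂ) → (Fin N → ℂ))
    (hright : (Z 0).mulVec (x 0) = μ 0 • x 0)
    (hleft : (Z 0).transpose.mulVec w = μ 0 • w)
    (hnorm : dotProduct w (x 0) = 1)
    (him : ∀ z : Fin N → ℂ,
      dotProduct w z = 0 ↔ ∃ u, (Z 0).mulVec u - μ 0 • u = z)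
    (hf : ∀ z : Fin N → ℂ, (∃ u, (Z 0).mulVec u - μ 0 • u = z) →
      (Z 0).mulVec (f z) - μ 0 • f z = z)
    (hμ : ∀ n, 1 ≤ n → μ n = dotProduct w ((Z n).mulVec (x 0) +
      ∑ i ∈ Finset.Ico 1 n, ((Z i).mulVec (x (n - i)) - μ i • x (n - i))))
    (hx : ∀ n, 1 ≤ n → x n =
      -f (∑ i ∈ Finset.Icc 1 n, ((Z i).mulVec (x (n - i)) - μ i • x (n - i)))) :
    ∀ n, 1 ≤ n → ∃ u : Fin N → ℂ, (Z 0).mulVec u - μ 0 • u =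
      ∑ i ∈ Finset.Icc 1 n, ((Z i).mulVec (x (n - i)) - μ i • x (n - i)) := by
  intro n hn
  rw [← him]
  have hsplit : Finset.Icc 1 n = Finset.Ico 1 (n + 1) := by
    rw [Finset.Ico_add_one_right_eq_Icc]
  rw [hsplit, Finset.sum_Ico_succ_top hn, Nat.sub_self]
  have := hμ n hn
  simp only [dotProduct_add, dotProduct_sub, dotProduct_smul,
    smul_eq_mul] at this ⊢
  rw [hnorm, this]
  ring
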